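/- Let R be η-averaged with η ∈ (0,1), fix(R) ≠ ∅, and θ ∈ (0, (1−η)/η). Then the even subsequence (ω^{2k}) of the alternating inertial iteration ω^{2k+1} = R(ω^{2k}), ω^{2k+2} = R((1+θ)ω^{2k+1} − θ ω^{2k}) converges (strongly in finite dimension, weakly in general) to a fixed point of R. -/

import Mathlib

open scoped RealInnerProductSpace
open Filter

/-- `Q` is nonexpansive. -/
def Nonexpansive {H : Type*} [NormedAddCommGroup H] (Q : H → H) : Prop :=
  ∀ x y, ‖Q x - Q y‖ ≤ ‖x - y‖

/-- `R` is `α`-averaged: `R = (1-α)•Id + α•Q` for some nonexpansive `Q`. -/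
def IsAveraged {H : Type*} [NormedAddCommGroup H] [InnerProductSpace ℝ H]
    (α : ℝ) (R : H → H) : Prop :=
  ∃ Q : H → H, Nonexpansive Q ∧ ∀ x, R x = (1 - α) • x + α • Q x

section Aux

variable {H : Type*} [NormedAddCommGroup H] [InnerProductSpace ℝ H]

lemma comb_norm_sq (a b : H) (t : ℝ) :
    ‖(1 - t) • a + t • b‖^2 = (1-t)*‖a‖^2 + t*‖b‖^2 - t*(1-t)*‖a-b‖^2 := by
  have h1 := @norm_add_sq_real H _ _ ((1-t)•a) (t•b)
  have h2 := @norm_sub_sq_real H _ _ a b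
  rw [h1]
  simp only [norm_smul, real_inner_smul_left, real_inner_smul_right, mul_pow, sq_abs,
    Real.norm_eq_abs]
  nlinarith [h2]

lemma avg_ineq {α : ℝ} (hα : 0 < α) {T : H → H} (hT : IsAveraged α T)
    {p : H} (hp : T p = p) (x : H) :
    ‖T x - p‖^2 + (1-α)/α * ‖T x - x‖^2 ≤ ‖x - p‖^2 := by
  obtain ⟨Q, hQ, hTx⟩ := hT
  have hQp : Q p = p := by
    have h0 := hTx p
    rw [hp] at h0
    have h : α • Q p = α • p := by
      have : (1-α) • p + α • Q p = (1-α) • p + α • p := by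
        rw [← h0]; module
      exact add_left_cancel this
    exact smul_right_injective H hα.ne' h
  have key : T x - p = (1 - α) • (x - p) + α • (Q x - p) := by
    rw [hTx x]; module
  have hdiff : (x - p) - (Q x - p) = x - Q x := by abel
  have hcomb := comb_norm_sq (x - p) (Q x - p) α
  rw [hdiff] at hcomb
  rw [key, hcomb]
  have hQle : ‖Q x - p‖ ≤ ‖x - p‖ := by
    have := hQ x p; rwa [hQp] at this
  have hTxx : T x - x = α • (Q x - x) := by rw [hTx x]; module
  have hTnorm : ‖T x - x‖^2 = α^2 * ‖x - Q x‖^2 := by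
    rw [hTxx, norm_smul, mul_pow, Real.norm_eq_abs, sq_abs, ← norm_neg (x - Q x)]
    ring_nf
    rw [neg_sub]
  rw [hTnorm]
  have h1 : ‖Q x - p‖^2 ≤ ‖x - p‖^2 := by
    have := pow_le_pow_left₀ (norm_nonneg _) hQle 2
    simpa using this
  have hd : (1-α)/α * (α^2 * ‖x - Q x‖^2) = α*(1-α)*‖x - Q x‖^2 := by
    field_simp
  rw [hd]
  nlinarith [norm_nonneg (x - Q x), sq_nonneg (‖x - Q x‖)]

end Aux

/-- For an `η`-averaged operator `R` with a fixed point, `θ ∈ (0,(1−η)/η)`, the even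
subsequence of the alternating inertial iteration
`ω^{2k+1} = R(ω^{2k})`, `ω^{2k+2} = R((1+θ)ω^{2k+1} − θω^{2k})`
converges to a fixed point of `R`. -/
theorem alternating_inertia_convergence {n : ℕ}
    (R : EuclideanSpace ℝ (Fin n) → EuclideanSpace ℝ (Fin n))
    (η θ : ℝ) (hη : η ∈ Set.Ioo (0 : ℝ) 1)
    (hθ : θ ∈ Set.Ioo (0 : ℝ) ((1 - η) / η))
    (hR : IsAveraged η R) (hfix : {ω | R ω = ω}.Nonempty)
    (ω : ℕ → EuclideanSpace ℝ (Fin n))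
    (hodd : ∀ k, ω (2 * k + 1) = R (ω (2 * k)))
    (heven : ∀ k, ω (2 * k + 2) = R ((1 + θ) • ω (2 * k + 1) - θ • ω (2 * k))) :
    ∃ p, R p = p ∧ Tendsto (fun k => ω (2 * k)) atTop (nhds p) := by
  obtain ⟨hη0, hη1⟩ := hη
  obtain ⟨hθ0, hθub⟩ := hθ
  obtain ⟨p, hp⟩ := hfix
  have hp : R p = p := hp
  set x : ℕ → EuclideanSpace ℝ (Fin n) := fun k => ω (2*k) with hxdef
  set S : EuclideanSpace ℝ (Fin n) → EuclideanSpace ℝ (Fin n) := fun z => (1+θ) • R z - θ • z with hSdef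
  set α : ℝ := η * (1+θ) with hαdef
  have hα0 : 0 < α := by positivity
  have hα1 : α < 1 := by
    have h := (lt_div_iff₀ hη0).mp hθub
    simp only [hαdef]
    nlinarith
  -- S is α-averaged with the same nonexpansive Q
  obtain ⟨Q, hQ, hRx⟩ := hR
  have hS : IsAveraged α S := by
    refine ⟨Q, hQ, fun z => ?_⟩
    simp only [hSdef, hRx z, hαdef]
    module
  have hR' : IsAveraged η R := ⟨Q, hQ, hRx⟩
  -- continuity
  have hQcont : Continuous Q := by
    have : LipschitzWith 1 Q := LipschitzWith.of_dist_le_mul (fun a b => by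
      rw [dist_eq_norm, dist_eq_norm]; simpa using hQ a b)
    exact this.continuous
  have hRcont : Continuous R := by
    have hRe : R = fun z => (1-η) • z + η • Q z := funext hRx
    rw [hRe]
    fun_prop
  have hScont : Continuous S := by
    simp only [hSdef]
    fun_prop
  -- fixed points of R are fixed by S
  have hSfix : ∀ q : EuclideanSpace ℝ (Fin n), R q = q → S q = q := by
    intro q hq
    simp only [hSdef, hq]
    module
  -- the recursion for the even subsequence
  have hx : ∀ k, x (k+1) = R (S (x k)) := by
    intro k
    have h2 : 2*(k+1) = 2*k+2 := by ring
    simp only [hxdef, hSdef, h2]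
    rw [heven k, hodd k]
  -- per-step Fejér inequality
  set cη : ℝ := (1-η)/η with hcηdef
  set cα : ℝ := (1-α)/α with hcαdef
  have hcη0 : 0 < cη := div_pos (by linarith) hη0
  have hcα0 : 0 < cα := div_pos (by linarith) hα0
  have step : ∀ q : EuclideanSpace ℝ (Fin n), R q = q → ∀ k,
      ‖x (k+1) - q‖^2 + cη * ‖x (k+1) - S (x k)‖^2 + cα * ‖S (x k) - x k‖^2
        ≤ ‖x k - q‖^2 := by
    intro q hq k
    have hSq := hSfix q hq
    have hA := avg_ineq hα0 hS hSq (x k)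
    have hB := avg_ineq hη0 hR' hq (S (x k))
    rw [hx k]
    simp only [← hcηdef, ← hcαdef] at hA hB ⊢
    linarith
  have decr : ∀ q : EuclideanSpace ℝ (Fin n), R q = q → ∀ k, ‖x (k+1) - q‖ ≤ ‖x k - q‖ := by
    intro q hq k
    have h := step q hq k
    have h1 : ‖x (k+1) - q‖^2 ≤ ‖x k - q‖^2 := by
      nlinarith [sq_nonneg ‖x (k+1) - S (x k)‖, sq_nonneg ‖S (x k) - x k‖,
        mul_nonneg hcη0.le (sq_nonneg ‖x (k+1) - S (x k)‖),
        mul_nonneg hcα0.le (sq_nonneg ‖S (x k) - x k‖)]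
    have := Real.sqrt_le_sqrt h1
    rwa [Real.sqrt_sq (norm_nonneg _), Real.sqrt_sq (norm_nonneg _)] at this
  -- boundedness
  have hmono : Antitone fun k => ‖x k - p‖ := antitone_nat_of_succ_le (decr p hp)
  have hball : ∀ k, x k ∈ Metric.closedBall p ‖x 0 - p‖ := by
    intro k
    rw [Metric.mem_closedBall, dist_eq_norm]
    exact hmono (Nat.zero_le k)
  -- summability of residuals
  have tele : ∀ N, ∑ k ∈ Finset.range N, cα * ‖S (x k) - x k‖^2 + ‖x N - p‖^2
      ≤ ‖x 0 - p‖^2 := by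
    intro N
    induction N with
    | zero => simp
    | succ N ih =>
      rw [Finset.sum_range_succ]
      have h := step p hp N
      have := mul_nonneg hcη0.le (sq_nonneg ‖x (N+1) - S (x N)‖)
      linarith
  have hsum : Summable fun k => ‖S (x k) - x k‖^2 := by
    apply summable_of_sum_range_le (c := cα⁻¹ * ‖x 0 - p‖^2) (fun k => sq_nonneg _)
    intro N
    have hrw : ∑ k ∈ Finset.range N, ‖S (x k) - x k‖^2
        = cα⁻¹ * ∑ k ∈ Finset.range N, cα * ‖S (x k) - x k‖^2 := by
      rw [← Finset.mul_sum, ← mul_assoc, inv_mul_cancel₀ hcα0.ne', one_mul]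
    rw [hrw]
    exact mul_le_mul_of_nonneg_left
      (by linarith [tele N, sq_nonneg ‖x N - p‖]) (inv_nonneg.mpr hcα0.le)
  have hto0sq : Tendsto (fun k => ‖S (x k) - x k‖^2) atTop (nhds 0) :=
    hsum.tendsto_atTop_zero
  -- extract a convergent subsequence
  obtain ⟨q, -, φ, hφ, hxφ⟩ :=
    (isCompact_closedBall p ‖x 0 - p‖).tendsto_subseq hball
  -- the cluster point is a fixed point of S, hence of R
  have hresc : Continuous fun z : EuclideanSpace ℝ (Fin n) => ‖S z - z‖^2 :=
    ((hScont.sub continuous_id).norm).pow 2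
  have h1 : Tendsto (fun j => ‖S (x (φ j)) - x (φ j)‖^2) atTop (nhds (‖S q - q‖^2)) :=
    (hresc.tendsto q).comp hxφ
  have h2 : Tendsto (fun j => ‖S (x (φ j)) - x (φ j)‖^2) atTop (nhds 0) :=
    hto0sq.comp hφ.tendsto_atTop
  have hSqq : S q = q := by
    have h0 : ‖S q - q‖^2 = 0 := tendsto_nhds_unique h1 h2
    have : ‖S q - q‖ = 0 := by
      nlinarith [norm_nonneg (S q - q)]
    rwa [norm_eq_zero, sub_eq_zero] at this
  have hq : R q = q := by
    have h3 : (1+θ) • R q = (1+θ) • q := by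
      have h4 : (1+θ) • R q - θ • q = q := hSqq
      have h5 : (1+θ) • R q = q + θ • q := sub_eq_iff_eq_add.mp h4
      rw [h5]; module
    have hne : (1+θ) ≠ 0 := by positivity
    exact smul_right_injective (EuclideanSpace ℝ (Fin n)) hne h3
  -- convergence of the whole sequence to q
  have hmq : Antitone fun k => ‖x k - q‖ := antitone_nat_of_succ_le (decr q hq)
  have hbdd : BddBelow (Set.range fun k => ‖x k - q‖) := by
    refine ⟨0, ?_⟩
    rintro y ⟨k, rfl⟩
    positivity
  have hlim : Tendsto (fun k => ‖x k - q‖) atTop (nhds (⨅ i, ‖x i - q‖)) :=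
    tendsto_atTop_ciInf hmq hbdd
  have hsub1 : Tendsto (fun j => ‖x (φ j) - q‖) atTop (nhds (⨅ i, ‖x i - q‖)) :=
    hlim.comp hφ.tendsto_atTop
  have hsub2 : Tendsto (fun j => ‖x (φ j) - q‖) atTop (nhds 0) :=
    tendsto_iff_norm_sub_tendsto_zero.mp hxφ
  have hinf0 : (⨅ i, ‖x i - q‖) = 0 := tendsto_nhds_unique hsub1 hsub2
  refine ⟨q, hq, ?_⟩
  rw [tendsto_iff_norm_sub_tendsto_zero]
  rw [hinf0] at hlim
  exact hlim
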